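/- For n ≥ 2 identical linear servers and attack strength α ≥ 0, if the machine penetration level satisfies r ≤ 1 − α(n−1)/n, then every team equilibrium x̃ satisfies C^α(x̃) = min{ n/(n−1), 1 + α/n }, which is at most the cost C^α(x̄) = 1 + α/n of the unresponsive profile x̄ = (1, 1, …, 1). -/

import Mathlib

open Finset

/-- System cost `C^α(x) = (1/n) ∑ᵢ xᵢ τᵢ(xᵢ) + α x₁ / n` (server 1 is index 0). -/
noncomputable def cost (n : ℕ) [NeZero n] (τ : Fin n → ℝ → ℝ) (α : ℝ) (x : Fin n → ℝ) : ℝ :=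
  (∑ i, x i * τ i (x i)) / (n : ℝ) + α * x 0 / (n : ℝ)

/-- Attacked delay functions: `τ₁^α = τ₁ + α`, `τᵢ^α = τᵢ` for `i > 1`. -/
noncomputable def tauA (n : ℕ) [NeZero n] (τ : Fin n → ℝ → ℝ) (α : ℝ) (i : Fin n) (z : ℝ) : ℝ :=
  τ i z + if i = 0 then α else 0

/-- A (partial) scheduling profile of total mass `mass`: nonnegative with entries summing to `mass`. -/
def IsProfile (n : ℕ) (mass : ℝ) (x : Fin n → ℝ) : Prop :=
  (∀ i, 0 ≤ x i) ∧ ∑ i, x i = mass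

/-- Team equilibrium: the selfish mass `n - ∑ r k` is scheduled by `xs`, machine `k`
schedules mass `r k` via `xk k`; every machine schedules globally optimally given the
others, and every selfish job is on a minimum-delay server. -/
def IsTeamEq (n m : ℕ) [NeZero n] (τ : Fin n → ℝ → ℝ) (α : ℝ) (r : Fin m → ℝ)
    (xs : Fin n → ℝ) (xk : Fin m → Fin n → ℝ) : Prop :=
  IsProfile n ((n : ℝ) - ∑ k, r k) xs ∧
  (∀ k, IsProfile n (r k) (xk k)) ∧
  (∀ k, ∀ y : Fin n → ℝ, IsProfile n (r k) y →
    cost n τ α (xs + ∑ j, xk j) ≤ cost n τ α (xs + y + ∑ j ∈ univ.erase k, xk j)) ∧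
  (∀ i, 0 < xs i → ∀ j,
    tauA n τ α i ((xs + ∑ l, xk l) i) ≤ tauA n τ α j ((xs + ∑ l, xk l) j))

/-- Identical linear delay functions `τᵢ(x) = x`. -/
def lin (n : ℕ) : Fin n → ℝ → ℝ := fun _ z => z


lemma machine_move {n m : ℕ} [NeZero n] {α : ℝ} {r : Fin m → ℝ}
    {xs : Fin n → ℝ} {xk : Fin m → Fin n → ℝ}
    (hk : ∀ k, IsProfile n (r k) (xk k))
    (hopt : ∀ k, ∀ y : Fin n → ℝ, IsProfile n (r k) y →
      cost n (lin n) α (xs + ∑ j, xk j) ≤ cost n (lin n) α (xs + y + ∑ j ∈ univ.erase k, xk j))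
    (k : Fin m) (i j : Fin n) (hij : i ≠ j) (hpos : 0 < xk k i) :
    2 * (xs + ∑ l, xk l) i + (if i = 0 then α else 0) ≤
      2 * (xs + ∑ l, xk l) j + (if j = 0 then α else 0) := by
  have hn0 : (0:ℝ) < (n:ℝ) := by exact_mod_cast Nat.pos_of_ne_zero (NeZero.ne n)
  set X : Fin n → ℝ := xs + ∑ l, xk l with hX
  have happ : ∀ t, X t = xs t + ∑ l, xk l t := by
    intro t; simp [hX, Finset.sum_apply]
  by_contra hq
  push_neg at hq
  set ci : ℝ := (if i = 0 then α else 0) with hci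
  set cj : ℝ := (if j = 0 then α else 0) with hcj
  set ε : ℝ := min (xk k i) ((2 * X i + ci - 2 * X j - cj)/4) with hε
  have hεpos : 0 < ε := lt_min hpos (by linarith)
  have hεle1 : ε ≤ xk k i := min_le_left _ _
  have hεle2 : ε ≤ (2 * X i + ci - 2 * X j - cj)/4 := min_le_right _ _
  set y : Fin n → ℝ := fun t => xk k t + (if t = j then ε else 0) - (if t = i then ε else 0)
    with hy
  have hyprof : IsProfile n (r k) y := by
    constructor
    · intro t
      by_cases hti : t = i
      · subst hti; simp [hy, hij]; linarith
      · by_cases htj : t = j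
        · subst htj; simp [hy, hti]; linarith [(hk k).1 t, hεpos]
        · simp [hy, hti, htj]; exact (hk k).1 t
    · rw [hy]
      rw [Finset.sum_sub_distrib, Finset.sum_add_distrib]
      simp [Finset.sum_ite_eq', (hk k).2]
  have hcost := hopt k y hyprof
  set Z : Fin n → ℝ := xs + y + ∑ l ∈ univ.erase k, xk l with hZ
  have hZapp : ∀ t, Z t = X t + ((if t = j then ε else 0) - (if t = i then ε else 0)) := by
    intro t
    have herase : ∑ l ∈ univ.erase k, xk l t = (∑ l, xk l t) - xk k t := by
      rw [Finset.sum_erase_eq_sub (Finset.mem_univ k)]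
    simp only [hZ, Pi.add_apply, Finset.sum_apply, happ t, hy]
    rw [herase]; ring
  have hsq : ∑ t, Z t * Z t
      = ∑ t, X t * X t + (2*ε*(X j) + ε^2) + (-(2*ε*(X i)) + ε^2) := by
    have hterm : ∀ t, Z t * Z t = X t * X t
        + ((if t = j then 2*ε*(X t) + ε^2 else 0) + (if t = i then -(2*ε*(X t)) + ε^2 else 0)) := by
      intro t
      rcases eq_or_ne t j with rfl | htj
      · rw [hZapp]; simp [hij.symm, Ne.symm hij]; ring
      · rcases eq_or_ne t i with rfl | hti
        · rw [hZapp]; simp [hij, htj]; ring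
        · rw [hZapp]; simp [hti, htj]
    rw [Finset.sum_congr rfl (fun t _ => hterm t)]
    rw [Finset.sum_add_distrib, Finset.sum_add_distrib]
    simp [Finset.sum_ite_eq']
    ring
  have hZ0 : Z 0 = X 0 + ((if (0:Fin n) = j then ε else 0) - (if (0:Fin n) = i then ε else 0)) :=
    hZapp 0
  have e1 : α * (if (0:Fin n) = j then ε else 0) = ε * cj := by
    rcases eq_or_ne j 0 with rfl | h
    · simp [hcj]; ring
    · simp [hcj, h, Ne.symm h]
  have e2 : α * (if (0:Fin n) = i then ε else 0) = ε * ci := by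
    rcases eq_or_ne i 0 with rfl | h
    · simp [hci]; ring
    · simp [hci, h, Ne.symm h]
  rw [cost, cost] at hcost
  simp only [lin] at hcost
  rw [hsq, hZ0] at hcost
  rw [← add_div, ← add_div, div_le_div_iff_of_pos_right hn0] at hcost
  have hexp : α * (X 0 + ((if (0:Fin n) = j then ε else 0) - (if (0:Fin n) = i then ε else 0)))
      = α * X 0 + ε * cj - ε * ci := by rw [mul_add, mul_sub, e1, e2]; ring
  rw [hexp] at hcost
  have hneg : 2 * X j + cj - 2 * X i - ci + 2*ε < 0 := by linarith
  nlinarith [hcost, mul_pos hεpos hεpos, mul_lt_mul_of_pos_left hneg hεpos]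

/-- with identical linear servers and low machine penetration
`r ≤ 1 − α(n−1)/n`, every team equilibrium has cost `min {n/(n−1), 1 + α/n}`, which is
at most the cost `1 + α/n` of the unresponsive profile `x̄ = (1,…,1)`. -/
theorem linear_low_penetration (n m : ℕ) [NeZero n] (hn : 2 ≤ n) (hm : 1 ≤ m)
    (α : ℝ) (hα : 0 ≤ α)
    (r : Fin m → ℝ) (hr : ∀ k, 0 ≤ r k) (hrsum : ∑ k, r k ≤ (n : ℝ))
    (hpen : ∑ k, r k ≤ 1 - α * ((n : ℝ) - 1) / n) :
    cost n (lin n) α (fun _ : Fin n => (1 : ℝ)) = 1 + α / n ∧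
    ∀ (xs : Fin n → ℝ) (xk : Fin m → Fin n → ℝ), IsTeamEq n m (lin n) α r xs xk →
      cost n (lin n) α (xs + ∑ j, xk j) = min ((n : ℝ) / ((n : ℝ) - 1)) (1 + α / n) ∧
      cost n (lin n) α (xs + ∑ j, xk j) ≤ cost n (lin n) α (fun _ : Fin n => (1 : ℝ)) := by
  have hn0 : (0:ℝ) < (n:ℝ) := by exact_mod_cast Nat.pos_of_ne_zero (NeZero.ne n)
  have hn2 : (2:ℝ) ≤ (n:ℝ) := by exact_mod_cast hn
  have hones : cost n (lin n) α (fun _ : Fin n => (1 : ℝ)) = 1 + α / n := by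
    rw [cost]
    simp only [lin, mul_one, Finset.sum_const, Finset.card_univ, Fintype.card_fin,
      nsmul_eq_mul, mul_one]
    rw [div_self hn0.ne']
  set R : ℝ := ∑ k, r k with hR
  have hR0 : 0 ≤ R := Finset.sum_nonneg fun k _ => hr k
  have hpen' : R * n ≤ (n:ℝ) - α * ((n:ℝ) - 1) := by
    have h := mul_le_mul_of_nonneg_right hpen hn0.le
    rw [sub_mul, one_mul, div_mul_cancel₀ _ hn0.ne'] at h
    exact h
  have hαn : α * ((n:ℝ) - 1) ≤ (n:ℝ) := by nlinarith [mul_nonneg hR0 hn0.le]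
  have hmin : min ((n : ℝ) / ((n : ℝ) - 1)) (1 + α / n) = 1 + α / n := by
    apply min_eq_right
    rw [le_div_iff₀ (by linarith : (0:ℝ) < (n:ℝ) - 1)]
    nlinarith [hαn, hn0, div_mul_cancel₀ α hn0.ne']
  refine ⟨hones, ?_⟩
  rintro xs xk ⟨hs, hk, hopt, hself⟩
  set X : Fin n → ℝ := xs + ∑ j, xk j with hX
  have happ : ∀ t, X t = xs t + ∑ l, xk l t := by
    intro t; simp [hX, Finset.sum_apply]
  have hXnn : ∀ t, 0 ≤ X t := fun t => by
    rw [happ t]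
    exact add_nonneg (hs.1 t) (Finset.sum_nonneg fun l _ => (hk l).1 t)
  have hXsum : ∑ t, X t = (n:ℝ) := by
    have h1 : ∑ t, X t = ∑ t, xs t + ∑ t, ∑ l, xk l t := by
      rw [← Finset.sum_add_distrib]
      exact Finset.sum_congr rfl fun t _ => happ t
    rw [h1, hs.2, Finset.sum_comm]
    have h2 : ∑ l, ∑ t : Fin n, xk l t = ∑ l, r l := Finset.sum_congr rfl fun l _ => (hk l).2
    rw [h2]; ring
  have hselfish : ∀ i, 0 < xs i → ∀ j,
      X i + (if i = 0 then α else 0) ≤ X j + (if j = 0 then α else 0) := by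
    intro i hi j
    have h := hself i hi j
    simpa [tauA, lin] using h
  have hmach : ∀ k i j, i ≠ j → 0 < xk k i →
      2 * X i + (if i = 0 then α else 0) ≤ 2 * X j + (if j = 0 then α else 0) :=
    fun k i j hij hp => machine_move hk hopt k i j hij hp
  -- all non-attacked servers are balanced
  have hba : ∀ i j : Fin n, i ≠ 0 → j ≠ 0 → X i ≤ X j := by
    intro i j hi hj
    by_contra hlt
    push_neg at hlt
    have hij : i ≠ j := fun h => by rw [h] at hlt; exact lt_irrefl _ hlt
    have h1 : xs i = 0 := by
      by_contra h
      have hp : 0 < xs i := (hs.1 i).lt_of_ne (Ne.symm h)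
      have h2 := hselfish i hp j
      rw [if_neg hi, if_neg hj] at h2
      linarith
    have h2 : ∀ k, xk k i = 0 := by
      intro k
      by_contra h
      have hp : 0 < xk k i := ((hk k).1 i).lt_of_ne (Ne.symm h)
      have h3 := hmach k i j hij hp
      rw [if_neg hi, if_neg hj] at h3
      linarith
    have hXi : X i = 0 := by
      rw [happ i, h1]
      simp [h2]
    have := hXnn j
    linarith
  obtain ⟨j1, hj1⟩ : ∃ j : Fin n, j ≠ 0 :=
    ⟨⟨1, by omega⟩, by simp [Fin.ext_iff]⟩
  set a : ℝ := X 0 with ha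
  set b : ℝ := X j1 with hb
  have hbeq : ∀ i : Fin n, i ≠ 0 → X i = b :=
    fun i hi => le_antisymm (hba i j1 hi hj1) (hba j1 i hj1 hi)
  have hcard : ((univ.erase (0 : Fin n)).card : ℝ) = (n:ℝ) - 1 := by
    rw [Finset.card_erase_of_mem (Finset.mem_univ _), Finset.card_univ, Fintype.card_fin]
    rw [Nat.cast_sub (by omega : 1 ≤ n), Nat.cast_one]
  have hconst : ∑ t ∈ univ.erase (0:Fin n), b = ((n:ℝ) - 1) * b := by
    rw [Finset.sum_const, nsmul_eq_mul, hcard]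
  have F1 : a + ((n:ℝ) - 1) * b = (n:ℝ) := by
    have h1 : ∑ t ∈ univ.erase (0:Fin n), X t = ((n:ℝ) - 1) * b := by
      rw [Finset.sum_congr rfl (fun t ht => hbeq t (Finset.ne_of_mem_erase ht)), hconst]
    have h2 : ∑ t ∈ univ.erase (0:Fin n), X t = (∑ t, X t) - X 0 :=
      Finset.sum_erase_eq_sub (Finset.mem_univ _)
    rw [h1, hXsum, ← ha] at h2
    linarith
  have hbnn : 0 ≤ b := hXnn j1
  -- the key balance equation
  have hnb : (n:ℝ) * b = (n:ℝ) + α := by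
    by_cases h0 : 0 < xs 0
    · have hA : a + α ≤ b := by
        have h := hselfish 0 h0 j1
        rw [if_pos rfl, if_neg hj1, ← ha, ← hb] at h
        linarith
      by_cases h1 : ∃ i, i ≠ 0 ∧ 0 < xs i
      · -- case A
        obtain ⟨i, hi, hip⟩ := h1
        have hB : b ≤ a + α := by
          have h := hselfish i hip 0
          rw [if_neg hi, if_pos rfl, hbeq i hi, ← ha] at h
          linarith
        linarith [F1]
      · -- case C : selfish mass only on server 0
        push_neg at h1
        have hzero : ∀ i : Fin n, i ≠ 0 → xs i = 0 :=
          fun i hi => le_antisymm (h1 i hi) (hs.1 i)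
        have hC : ((n:ℝ) - 1) * b ≤ R := by
          have e1 : ∑ t ∈ univ.erase (0:Fin n), X t = ((n:ℝ) - 1) * b := by
            rw [Finset.sum_congr rfl (fun t ht => hbeq t (Finset.ne_of_mem_erase ht)), hconst]
          have e2 : ∑ t ∈ univ.erase (0:Fin n), X t = ∑ t ∈ univ.erase (0:Fin n), ∑ l, xk l t := by
            refine Finset.sum_congr rfl fun t ht => ?_
            rw [happ t, hzero t (Finset.ne_of_mem_erase ht), zero_add]
          have e3 : ∑ t ∈ univ.erase (0:Fin n), ∑ l, xk l t ≤ R := by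
            rw [Finset.sum_comm]
            refine Finset.sum_le_sum fun l _ => ?_
            calc ∑ t ∈ univ.erase (0:Fin n), xk l t ≤ ∑ t, xk l t :=
                  Finset.sum_le_sum_of_subset_of_nonneg (Finset.erase_subset _ _)
                    (fun t _ _ => (hk l).1 t)
              _ = r l := (hk l).2
          rw [← e1, e2]
          exact e3
        have hR1 : R ≤ 1 := by nlinarith [mul_nonneg hα (by linarith : (0:ℝ) ≤ (n:ℝ) - 1)]
        have hnb2 : 0 ≤ (n:ℝ) * b - 2 * b := by
          nlinarith [mul_nonneg (by linarith : (0:ℝ) ≤ (n:ℝ) - 2) hbnn]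
        linarith [F1, hC, hR1, hA, hnb2]
    · -- case B : no selfish mass on attacked server
      have hxs0 : xs 0 = 0 := le_antisymm (not_lt.mp h0) (hs.1 0)
      have haR : a ≤ R := by
        rw [ha, happ 0, hxs0, zero_add]
        exact Finset.sum_le_sum fun l _ => by
          calc xk l 0 ≤ ∑ t, xk l t :=
                Finset.single_le_sum (fun t _ => (hk l).1 t) (Finset.mem_univ 0)
            _ = r l := (hk l).2
      have hex : ∃ i, i ≠ 0 ∧ 0 < xs i := by
        by_contra h
        push_neg at h
        have hz : ∀ i : Fin n, xs i = 0 := by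
          intro i
          rcases eq_or_ne i 0 with rfl | hi
          · exact hxs0
          · exact le_antisymm (h i hi) (hs.1 i)
        have hsum0 : ∑ i, xs i = 0 := Finset.sum_eq_zero fun i _ => hz i
        rw [hs.2] at hsum0
        have hRn : R = (n:ℝ) := by rw [hR]; linarith
        nlinarith [mul_nonneg hα (by linarith : (0:ℝ) ≤ (n:ℝ) - 1)]
      obtain ⟨i, hi, hip⟩ := hex
      have hB : b ≤ a + α := by
        have h := hselfish i hip 0
        rw [if_neg hi, if_pos rfl, hbeq i hi, ← ha] at h
        linarith
      have haRn : a * (n:ℝ) ≤ R * (n:ℝ) := mul_le_mul_of_nonneg_right haR hn0.le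
      have F1n : a * (n:ℝ) + ((n:ℝ) - 1) * b * (n:ℝ) = (n:ℝ) * (n:ℝ) := by
        linear_combination (n:ℝ) * F1
      apply le_antisymm
      · linarith [F1, hB]
      · have hpos : (0:ℝ) < (n:ℝ) - 1 := by linarith
        have h4 : ((n:ℝ) - 1) * ((n:ℝ) + α) ≤ ((n:ℝ) - 1) * ((n:ℝ) * b) := by
          linarith [F1n, haRn, hpen']
        exact (mul_le_mul_iff_right₀ hpos).mp h4
  -- compute the equilibrium cost
  have hbv : b = ((n:ℝ) + α) / n := by
    rw [eq_div_iff hn0.ne']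
    linarith [hnb]
  have hav : a = (n:ℝ) - ((n:ℝ) - 1) * b := by linarith [F1]
  have hcost : cost n (lin n) α X = 1 + α / n := by
    rw [cost]
    simp only [lin]
    have h2 : ∑ t ∈ univ.erase (0:Fin n), X t * X t = ((n:ℝ) - 1) * (b * b) := by
      rw [Finset.sum_congr rfl (fun t ht => by rw [hbeq t (Finset.ne_of_mem_erase ht)])]
      rw [Finset.sum_const, nsmul_eq_mul, hcard]
    have h1 : ∑ t ∈ univ.erase (0:Fin n), X t * X t = (∑ t, X t * X t) - X 0 * X 0 :=
      Finset.sum_erase_eq_sub (Finset.mem_univ _)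
    have haa : a * a = X 0 * X 0 := by rw [ha]
    have hsum2 : ∑ t, X t * X t = a * a + ((n:ℝ) - 1) * (b * b) := by
      rw [h2] at h1
      linarith [h1, haa]
    have hab : b = a + α := by linarith [F1, hnb]
    have key : a * a + ((n:ℝ) - 1) * (b * b) + α * a = (n:ℝ) + α := by
      linear_combination (b + 1) * hnb - (a + b) * hab
    rw [hsum2, ← ha, ← add_div, key, add_div, div_self hn0.ne']
  exact ⟨by rw [hmin]; exact hcost, by rw [hcost, hones]⟩
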